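/- Let l be a prime, let A be a commutative Artinian local ring with maximal ideal 𝔪 whose residue field F has characteristic l, let q ≥ 2 be an integer not divisible by l, let f, n ≥ 1 be integers with v_l(q^f − 1) > v_l(n!), where v_l denotes the l-adic valuation, and let n = n₁ + ⋯ + n_r be a partition of n into positive integers. Let Σ, Φ ∈ GL_n(A) satisfy Φ Σ Φ⁻¹ = Σ^q. Assume: (i) the entrywise reduction of Σ is the block diagonal matrix with diagonal blocks the Jordan blocks J_{n₁}(1), …, J_{n_r}(1); (ii) Φ is block diagonal with diagonal blocks Φ₁, …, Φ_r; and (iii) the characteristic polynomials of the reductions (Φ̄₁)^f, …, (Φ̄_r)^f are pairwise coprime in F[X]. Then Σ is block diagonal. -/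

import Mathlib

open IsLocalRing

set_option linter.unusedSectionVars false
set_option maxHeartbeats 1000000

namespace IBDaux

open IsLocalRing Matrix Polynomial Finset

/-! ### Generic matrix-entry ideal membership helpers -/

section entIn

variable {A : Type*} [CommRing A] {m1 m2 m3 : Type*} [Fintype m1] [Fintype m2] [Fintype m3]

/-- All entries of a matrix lie in an ideal. -/
def entIn (I : Ideal A) (X : Matrix m1 m2 A) : Prop := ∀ a b, X a b ∈ I

theorem entIn.add {I : Ideal A} {X Y : Matrix m1 m2 A} (hX : entIn I X) (hY : entIn I Y) :
    entIn I (X + Y) := fun a b => I.add_mem (hX a b) (hY a b)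

theorem entIn.sub {I : Ideal A} {X Y : Matrix m1 m2 A} (hX : entIn I X) (hY : entIn I Y) :
    entIn I (X - Y) := fun a b => I.sub_mem (hX a b) (hY a b)

theorem entIn.zero {I : Ideal A} : entIn I (0 : Matrix m1 m2 A) := fun _ _ => I.zero_mem

theorem entIn.smul {I : Ideal A} {X : Matrix m1 m2 A} (c : A) (hX : entIn I X) :
    entIn I (c • X) := fun a b => by
  rw [Matrix.smul_apply, smul_eq_mul]; exact Ideal.mul_mem_left _ _ (hX a b)

theorem entIn.mul_left {I : Ideal A} {X : Matrix m1 m2 A} (Y : Matrix m3 m1 A)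
    (hX : entIn I X) : entIn I (Y * X) := fun a b => by
  rw [Matrix.mul_apply]
  exact Submodule.sum_mem _ fun c _ => Ideal.mul_mem_left _ _ (hX c b)

theorem entIn.mul_right {I : Ideal A} {X : Matrix m1 m2 A} (Y : Matrix m2 m3 A)
    (hX : entIn I X) : entIn I (X * Y) := fun a b => by
  rw [Matrix.mul_apply]
  exact Submodule.sum_mem _ fun c _ => Ideal.mul_mem_right _ _ (hX a c)

theorem entIn.mul_mul {I J K : Ideal A} {X : Matrix m1 m2 A} {Y : Matrix m2 m3 A}
    (hX : entIn I X) (hY : entIn J Y) (h : ∀ a b : A, a ∈ I → b ∈ J → a * b ∈ K) :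
    entIn K (X * Y) := fun a b => by
  rw [Matrix.mul_apply]
  exact Submodule.sum_mem _ fun c _ => h _ _ (hX a c) (hY c b)

theorem entIn.sum {I : Ideal A} {s : Finset ℕ} {X : ℕ → Matrix m1 m2 A}
    (hX : ∀ k ∈ s, entIn I (X k)) : entIn I (∑ k ∈ s, X k) := fun a b => by
  rw [Matrix.sum_apply]
  exact Submodule.sum_mem _ fun c hc => hX c hc a b

end entIn

/-! ### Block structure helpers -/

section blocks

variable {A : Type*} [CommRing A] {r : ℕ} {n : Fin r → ℕ}

/-- Extensionality for the sigma index type via natural values. -/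
theorem sig_ext_iff (z w : (i : Fin r) × Fin (n i)) :
    z = w ↔ z.1 = w.1 ∧ ((z.2 : ℕ) = (w.2 : ℕ)) := by
  constructor
  · rintro rfl; exact ⟨rfl, rfl⟩
  · obtain ⟨i, a⟩ := z; obtain ⟨j, b⟩ := w
    rintro ⟨h1, h2⟩
    dsimp at h1 h2
    subst h1
    rw [Fin.val_eq_val] at h2
    rw [h2]

/-- Block diagonal predicate. -/
def IsBlkDiag (X : Matrix ((i : Fin r) × Fin (n i)) ((i : Fin r) × Fin (n i)) A) : Prop :=
  ∀ x y : (i : Fin r) × Fin (n i), x.1 ≠ y.1 → X x y = 0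

theorem IsBlkDiag.one : IsBlkDiag (1 : Matrix ((i : Fin r) × Fin (n i)) ((i : Fin r) × Fin (n i)) A) := by
  intro x y h
  exact Matrix.one_apply_ne (fun e => h (congrArg Sigma.fst e))

theorem IsBlkDiag.mul {X Y : Matrix ((i : Fin r) × Fin (n i)) ((i : Fin r) × Fin (n i)) A}
    (hX : IsBlkDiag X) (hY : IsBlkDiag Y) : IsBlkDiag (X * Y) := by
  intro x y h
  rw [Matrix.mul_apply]
  refine Finset.sum_eq_zero fun z _ => ?_
  by_cases hz : x.1 = z.1
  · rw [hY z y (fun e => h (hz.trans e)), mul_zero]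
  · rw [hX x z hz, zero_mul]

theorem IsBlkDiag.pow {X : Matrix ((i : Fin r) × Fin (n i)) ((i : Fin r) × Fin (n i)) A}
    (hX : IsBlkDiag X) (k : ℕ) : IsBlkDiag (X ^ k) := by
  induction k with
  | zero => simpa [pow_zero] using IsBlkDiag.one
  | succ k ih => rw [pow_succ]; exact ih.mul hX

/-- The `i`-th diagonal block of a matrix. -/
def blk (X : Matrix ((i : Fin r) × Fin (n i)) ((i : Fin r) × Fin (n i)) A) (i : Fin r) :
    Matrix (Fin (n i)) (Fin (n i)) A :=
  Matrix.of fun a b => X ⟨i, a⟩ ⟨i, b⟩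

theorem mul_apply_left {X Y : Matrix ((i : Fin r) × Fin (n i)) ((i : Fin r) × Fin (n i)) A}
    (hX : IsBlkDiag X) (i : Fin r) (a : Fin (n i)) (y : (i : Fin r) × Fin (n i)) :
    (X * Y) ⟨i, a⟩ y = ∑ c : Fin (n i), X ⟨i, a⟩ ⟨i, c⟩ * Y ⟨i, c⟩ y := by
  rw [Matrix.mul_apply, ← Finset.univ_sigma_univ, Finset.sum_sigma]
  refine Finset.sum_eq_single i (fun j _ hj => Finset.sum_eq_zero fun c _ => ?_) (by simp)
  rw [hX _ _ (by simpa using (Ne.symm hj)), zero_mul]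

theorem mul_apply_right {X Y : Matrix ((i : Fin r) × Fin (n i)) ((i : Fin r) × Fin (n i)) A}
    (hY : IsBlkDiag Y) (x : (i : Fin r) × Fin (n i)) (j : Fin r) (b : Fin (n j)) :
    (X * Y) x ⟨j, b⟩ = ∑ c : Fin (n j), X x ⟨j, c⟩ * Y ⟨j, c⟩ ⟨j, b⟩ := by
  rw [Matrix.mul_apply, ← Finset.univ_sigma_univ, Finset.sum_sigma]
  refine Finset.sum_eq_single j (fun i _ hi => Finset.sum_eq_zero fun c _ => ?_) (by simp)
  rw [hY _ _ (by simpa using hi), mul_zero]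

theorem blk_mul {X Y : Matrix ((i : Fin r) × Fin (n i)) ((i : Fin r) × Fin (n i)) A}
    (hX : IsBlkDiag X) (i : Fin r) : blk (X * Y) i = blk X i * blk Y i := by
  ext a b
  rw [blk, Matrix.of_apply, mul_apply_left hX, Matrix.mul_apply]
  rfl

theorem blk_pow {X : Matrix ((i : Fin r) × Fin (n i)) ((i : Fin r) × Fin (n i)) A}
    (hX : IsBlkDiag X) (i : Fin r) (k : ℕ) : blk (X ^ k) i = (blk X i) ^ k := by
  induction k with
  | zero =>
    ext a b
    simp [blk, pow_zero, Matrix.one_apply, sig_ext_iff, Fin.val_eq_val]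
  | succ k ih =>
    rw [pow_succ, blk_mul (hX.pow k), ih, pow_succ]

end blocks

/-! ### The nilpotent shift matrix `W` -/

section Wm

variable (A : Type*) [CommRing A] {r : ℕ} (n : Fin r → ℕ)

/-- The block-diagonal nilpotent shift matrix (superdiagonal 1's within blocks). -/
def Wm : Matrix ((i : Fin r) × Fin (n i)) ((i : Fin r) × Fin (n i)) A :=
  Matrix.of fun x y => if x.1 = y.1 ∧ (y.2 : ℕ) = (x.2 : ℕ) + 1 then 1 else 0

variable {A n}

theorem Wm_blkDiag : IsBlkDiag (Wm A n) := by
  intro x y h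
  exact if_neg (fun c => h c.1)

theorem Wm_pow_apply (s : ℕ) (x y : (i : Fin r) × Fin (n i)) :
    (Wm A n ^ s) x y = if x.1 = y.1 ∧ (y.2 : ℕ) = (x.2 : ℕ) + s then 1 else 0 := by
  induction s generalizing y with
  | zero =>
    rw [pow_zero, Matrix.one_apply]
    by_cases h : x = y
    · rw [if_pos h, if_pos (by obtain rfl := h; exact ⟨rfl, by omega⟩)]
    · rw [if_neg h, if_neg (fun c => h ((sig_ext_iff x y).mpr ⟨c.1, by omega⟩))]
  | succ s ih =>
    rw [pow_succ, Matrix.mul_apply]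
    have key : ∀ z : (i : Fin r) × Fin (n i),
        (Wm A n ^ s) x z * (Wm A n) z y =
        if x.1 = z.1 ∧ (z.2 : ℕ) = (x.2 : ℕ) + s then
          (if z.1 = y.1 ∧ (y.2 : ℕ) = (z.2 : ℕ) + 1 then 1 else 0) else 0 := by
      intro z
      rw [ih, Wm, Matrix.of_apply]
      by_cases c1 : x.1 = z.1 ∧ (z.2 : ℕ) = (x.2 : ℕ) + s
      · rw [if_pos c1, if_pos c1, one_mul]
      · rw [if_neg c1, if_neg c1, zero_mul]
    simp_rw [key]
    by_cases h : x.1 = y.1 ∧ (y.2 : ℕ) = (x.2 : ℕ) + (s + 1)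
    · have hlt : (x.2 : ℕ) + s < n x.1 := by
        have h2 := y.2.isLt
        have h3 : n x.1 = n y.1 := congrArg n h.1
        omega
      rw [if_pos h]
      rw [Finset.sum_eq_single (⟨x.1, ⟨(x.2 : ℕ) + s, hlt⟩⟩ : (i : Fin r) × Fin (n i))]
      · rw [if_pos ⟨rfl, rfl⟩, if_pos ⟨h.1, h.2⟩]
      · intro z _ hz
        by_cases c1 : x.1 = z.1 ∧ (z.2 : ℕ) = (x.2 : ℕ) + s
        · exact absurd ((sig_ext_iff z ⟨x.1, ⟨(x.2 : ℕ) + s, hlt⟩⟩).mpr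
            ⟨c1.1.symm, c1.2⟩) hz
        · rw [if_neg c1]
      · intro h'; exact absurd (Finset.mem_univ _) h'
    · rw [if_neg h]
      refine Finset.sum_eq_zero fun z _ => ?_
      by_cases c1 : x.1 = z.1 ∧ (z.2 : ℕ) = (x.2 : ℕ) + s
      · rw [if_pos c1, if_neg]
        rintro ⟨e1, e2⟩
        exact h ⟨c1.1.trans e1, by omega⟩
      · rw [if_neg c1]

theorem Wm_pow_blkDiag (s : ℕ) : IsBlkDiag (Wm A n ^ s) := Wm_blkDiag.pow s

theorem Wm_pow_eq_zero {N : ℕ} (hnN : ∀ i, n i ≤ N) {s : ℕ} (hs : N ≤ s) :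
    (Wm A n ^ s) = 0 := by
  ext x y
  rw [Wm_pow_apply, Matrix.zero_apply, if_neg]
  rintro ⟨e1, e2⟩
  have := y.2.isLt
  have := hnN y.1
  omega

theorem Wpow_mul_apply (s : ℕ) (X : Matrix ((i : Fin r) × Fin (n i)) ((i : Fin r) × Fin (n i)) A)
    (x y : (i : Fin r) × Fin (n i)) :
    (Wm A n ^ s * X) x y =
      if h : (x.2 : ℕ) + s < n x.1 then X ⟨x.1, ⟨(x.2 : ℕ) + s, h⟩⟩ y else 0 := by
  rw [Matrix.mul_apply]
  split_ifs with h
  · rw [Finset.sum_eq_single (⟨x.1, ⟨(x.2 : ℕ) + s, h⟩⟩ : (i : Fin r) × Fin (n i))]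
    · rw [Wm_pow_apply, if_pos ⟨rfl, rfl⟩, one_mul]
    · intro z _ hz
      rw [Wm_pow_apply]
      by_cases c1 : x.1 = z.1 ∧ (z.2 : ℕ) = (x.2 : ℕ) + s
      · exact absurd ((sig_ext_iff z ⟨x.1, ⟨(x.2 : ℕ) + s, h⟩⟩).mpr ⟨c1.1.symm, c1.2⟩) hz
      · rw [if_neg c1, zero_mul]
    · intro h'; exact absurd (Finset.mem_univ _) h'
  · refine Finset.sum_eq_zero fun z _ => ?_
    rw [Wm_pow_apply]
    by_cases c1 : x.1 = z.1 ∧ (z.2 : ℕ) = (x.2 : ℕ) + s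
    · exfalso
      have h1 := z.2.isLt
      have h2 : n z.1 = n x.1 := congrArg n c1.1.symm
      obtain ⟨e1, e2⟩ := c1
      omega
    · rw [if_neg c1, zero_mul]

theorem mul_Wpow_apply (t : ℕ) (X : Matrix ((i : Fin r) × Fin (n i)) ((i : Fin r) × Fin (n i)) A)
    (x y : (i : Fin r) × Fin (n i)) :
    (X * Wm A n ^ t) x y =
      if t ≤ (y.2 : ℕ) then
        X x ⟨y.1, ⟨(y.2 : ℕ) - t, lt_of_le_of_lt (Nat.sub_le _ _) y.2.isLt⟩⟩ else 0 := by
  rw [Matrix.mul_apply]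
  split_ifs with h
  · rw [Finset.sum_eq_single
      (⟨y.1, ⟨(y.2 : ℕ) - t, lt_of_le_of_lt (Nat.sub_le _ _) y.2.isLt⟩⟩ : (i : Fin r) × Fin (n i))]
    · rw [Wm_pow_apply, if_pos ⟨rfl, by simp [Nat.sub_add_cancel h]⟩, mul_one]
    · intro z _ hz
      rw [Wm_pow_apply]
      by_cases c1 : z.1 = y.1 ∧ (y.2 : ℕ) = (z.2 : ℕ) + t
      · refine absurd ((sig_ext_iff z
          ⟨y.1, ⟨(y.2 : ℕ) - t, lt_of_le_of_lt (Nat.sub_le _ _) y.2.isLt⟩⟩).mpr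
          ⟨c1.1, ?_⟩) hz
        have := c1.2
        simp only []
        omega
      · rw [if_neg c1, mul_zero]
    · intro h'; exact absurd (Finset.mem_univ _) h'
  · refine Finset.sum_eq_zero fun z _ => ?_
    rw [Wm_pow_apply]
    by_cases c1 : z.1 = y.1 ∧ (y.2 : ℕ) = (z.2 : ℕ) + t
    · exfalso; obtain ⟨e1, e2⟩ := c1; omega
    · rw [if_neg c1, mul_zero]

end Wm

/-! ### Block-filtered ideal membership -/

section BlkIn

variable {A : Type*} [CommRing A] {r : ℕ} {n : Fin r → ℕ}

/-- Diagonal-block entries lie in `Id`, off-diagonal-block entries in `Io`. -/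
def BlkIn (Id Io : Ideal A)
    (X : Matrix ((i : Fin r) × Fin (n i)) ((i : Fin r) × Fin (n i)) A) : Prop :=
  ∀ x y : (i : Fin r) × Fin (n i), X x y ∈ if x.1 = y.1 then Id else Io

theorem BlkIn.add {Id Io : Ideal A}
    {X Y : Matrix ((i : Fin r) × Fin (n i)) ((i : Fin r) × Fin (n i)) A}
    (hX : BlkIn Id Io X) (hY : BlkIn Id Io Y) : BlkIn Id Io (X + Y) := fun x y =>
  Submodule.add_mem _ (hX x y) (hY x y)

theorem BlkIn.sub {Id Io : Ideal A}
    {X Y : Matrix ((i : Fin r) × Fin (n i)) ((i : Fin r) × Fin (n i)) A}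
    (hX : BlkIn Id Io X) (hY : BlkIn Id Io Y) : BlkIn Id Io (X - Y) := fun x y =>
  Submodule.sub_mem _ (hX x y) (hY x y)

theorem blkIn_of_entIn {I Id Io : Ideal A}
    {X : Matrix ((i : Fin r) × Fin (n i)) ((i : Fin r) × Fin (n i)) A}
    (hX : entIn I X) (h1 : I ≤ Id) (h2 : I ≤ Io) : BlkIn Id Io X := fun x y => by
  by_cases h : x.1 = y.1
  · rw [if_pos h]; exact h1 (hX x y)
  · rw [if_neg h]; exact h2 (hX x y)

theorem BlkIn.mul {Ia Ja Ib Jb Ic Jc : Ideal A}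
    {X Y : Matrix ((i : Fin r) × Fin (n i)) ((i : Fin r) × Fin (n i)) A}
    (hX : BlkIn Ia Ja X) (hY : BlkIn Ib Jb Y)
    (hdd : ∀ a b : A, a ∈ Ia → b ∈ Ib → a * b ∈ Ic)
    (hooI : ∀ a b : A, a ∈ Ja → b ∈ Jb → a * b ∈ Ic)
    (hooJ : ∀ a b : A, a ∈ Ja → b ∈ Jb → a * b ∈ Jc)
    (hdo : ∀ a b : A, a ∈ Ia → b ∈ Jb → a * b ∈ Jc)
    (hod : ∀ a b : A, a ∈ Ja → b ∈ Ib → a * b ∈ Jc) :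
    BlkIn Ic Jc (X * Y) := by
  intro x y
  rw [Matrix.mul_apply]
  refine Submodule.sum_mem _ fun z _ => ?_
  have hxz := hX x z
  have hzy := hY z y
  by_cases h1 : x.1 = y.1
  · rw [if_pos h1]
    by_cases h2 : x.1 = z.1
    · rw [if_pos h2] at hxz
      rw [if_pos (h2.symm.trans h1)] at hzy
      exact hdd _ _ hxz hzy
    · rw [if_neg h2] at hxz
      rw [if_neg (fun e => h2 (h1.trans e.symm))] at hzy
      exact hooI _ _ hxz hzy
  · rw [if_neg h1]
    by_cases h2 : x.1 = z.1
    · rw [if_pos h2] at hxz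
      rw [if_neg (fun e => h1 (h2.trans e))] at hzy
      exact hdo _ _ hxz hzy
    · rw [if_neg h2] at hxz
      by_cases h3 : z.1 = y.1
      · rw [if_pos h3] at hzy
        exact hod _ _ hxz hzy
      · rw [if_neg h3] at hzy
        exact hooJ _ _ hxz hzy

end BlkIn

/-! ### Arithmetic: divisibility of binomial coefficients -/

theorem choose_dvd_main {l : ℕ} (hl : l.Prime) {M N k : ℕ} (hM : 2 ≤ M)
    (hval : padicValNat l (Nat.factorial N) < padicValNat l (M - 1))
    (hk2 : 2 ≤ k) (hkN : k ≤ N) : l ∣ M.choose k := by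
  haveI : Fact l.Prime := ⟨hl⟩
  by_cases hkM : M < k
  · rw [Nat.choose_eq_zero_of_lt hkM]; exact dvd_zero l
  push_neg at hkM
  set d := padicValNat l (Nat.factorial N) with hd
  have hM1ne : M - 1 ≠ 0 := by omega
  have hld : l ^ (d + 1) ∣ M - 1 := (padicValNat_dvd_iff_le hM1ne).mpr (by omega)
  set C := M.choose k with hC
  have hCne : C ≠ 0 := (Nat.choose_pos hkM).ne'
  -- identities
  have e1 : M * Nat.choose (M - 1) (k - 1) = C * k := by
    have := Nat.add_one_mul_choose_eq (M - 1) (k - 1)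
    have hMs : M - 1 + 1 = M := by omega
    have hks : k - 1 + 1 = k := by omega
    rwa [hMs, hks] at this
  have e2 : (M - 1) * Nat.choose (M - 2) (k - 2) = Nat.choose (M - 1) (k - 1) * (k - 1) := by
    have := Nat.add_one_mul_choose_eq (M - 2) (k - 2)
    have hMs : M - 2 + 1 = M - 1 := by omega
    have hks : k - 2 + 1 = k - 1 := by omega
    rwa [hMs, hks] at this
  have key : C * k * (k - 1) = M * ((M - 1) * Nat.choose (M - 2) (k - 2)) := by
    rw [e2, ← mul_assoc, e1]
  have hdvd2 : l ^ (d + 1) ∣ C * k * (k - 1) := by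
    rw [key]
    exact Dvd.dvd.mul_left (hld.mul_right _) M
  have hprodne : C * k * (k - 1) ≠ 0 := by
    have : 0 < k - 1 := by omega
    positivity
  have hv1 : d + 1 ≤ padicValNat l (C * k * (k - 1)) :=
    (padicValNat_dvd_iff_le hprodne).mp hdvd2
  have hsplit : padicValNat l (C * k * (k - 1)) =
      padicValNat l C + padicValNat l k + padicValNat l (k - 1) := by
    rw [padicValNat.mul (by positivity) (by omega), padicValNat.mul (by omega) (by omega)]
  -- k * (k-1) divides N!
  have hcop : Nat.Coprime k (k - 1) := by
    have : k = (k - 1) + 1 := by omega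
    rw [this]
    simp [Nat.coprime_self_add_left]
  have hkf : k * (k - 1) ∣ Nat.factorial N :=
    Nat.Coprime.mul_dvd_of_dvd_of_dvd hcop
      (Nat.dvd_factorial (by omega) hkN)
      (Nat.dvd_factorial (by omega) (by omega))
  have hvk : padicValNat l (k * (k - 1)) ≤ d := by
    rw [hd]
    refine (padicValNat_dvd_iff_le (Nat.factorial_ne_zero N)).mp ?_
    exact dvd_trans pow_padicValNat_dvd hkf
  have hvk' : padicValNat l k + padicValNat l (k - 1) ≤ d := by
    rwa [padicValNat.mul (by omega) (by omega)] at hvk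
  have : 1 ≤ padicValNat l C := by omega
  exact dvd_of_one_le_padicValNat this

/-! ### The Sylvester-type lemma with lifts -/

section sylv

variable {A : Type*} [CommRing A] [IsLocalRing A] {ni nj : ℕ}

theorem sylvester (IJ I1 : Ideal A)
    (hmIJ : ∀ a b : A, a ∈ maximalIdeal A → b ∈ IJ → a * b ∈ I1)
    (Qi : Matrix (Fin ni) (Fin ni) A) (Qj : Matrix (Fin nj) (Fin nj) A)
    (hcop : IsCoprime (Matrix.charpoly (Qi.map (residue A)))
      (Matrix.charpoly (Qj.map (residue A))))
    (E : Matrix (Fin ni) (Fin nj) A) (hE : entIn IJ E)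
    (hcomm : entIn I1 (Qi * E - E * Qj)) : entIn I1 E := by
  classical
  -- polynomial commutation
  have hpow : ∀ d : ℕ, entIn I1 (Qi ^ d * E - E * Qj ^ d) := by
    intro d
    induction d with
    | zero => simpa using (entIn.zero : entIn I1 (0 : Matrix (Fin ni) (Fin nj) A))
    | succ d ih =>
      have heq : Qi ^ (d + 1) * E - E * Qj ^ (d + 1)
          = Qi * (Qi ^ d * E - E * Qj ^ d) + (Qi * E - E * Qj) * Qj ^ d := by
        simp only [pow_succ', Matrix.mul_sub, Matrix.sub_mul, Matrix.mul_assoc]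
        abel
      rw [heq]
      exact (ih.mul_left Qi).add (hcomm.mul_right (Qj ^ d))
  have hpoly : ∀ g : A[X], entIn I1 ((aeval Qi g) * E - E * (aeval Qj g)) := by
    intro g
    induction g using Polynomial.induction_on' with
    | add p q hp hq =>
      have heq : (aeval Qi (p + q)) * E - E * (aeval Qj (p + q))
          = ((aeval Qi p) * E - E * (aeval Qj p)) + ((aeval Qi q) * E - E * (aeval Qj q)) := by
        rw [map_add, map_add]
        simp only [Matrix.add_mul, Matrix.mul_add]
        abel
      rw [heq]; exact hp.add hq
    | monomial d c =>
      have heq : (aeval Qi (Polynomial.monomial d c)) * E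
            - E * (aeval Qj (Polynomial.monomial d c))
          = c • (Qi ^ d * E - E * Qj ^ d) := by
        rw [aeval_monomial, aeval_monomial]
        simp only [Algebra.algebraMap_eq_smul_one, Matrix.smul_mul, Matrix.mul_smul,
          one_mul, smul_sub]
      rw [heq]
      exact (hpow d).smul c
  -- lift the coprimality data
  obtain ⟨u, v, huv⟩ := hcop
  obtain ⟨U, hU⟩ := Polynomial.map_surjective (residue A) residue_surjective u
  obtain ⟨V, hV⟩ := Polynomial.map_surjective (residue A) residue_surjective v
  set ci := Matrix.charpoly Qi with hci
  set cj := Matrix.charpoly Qj with hcj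
  have hmapi : ci.map (residue A) = Matrix.charpoly (Qi.map (residue A)) :=
    (Matrix.charpoly_map Qi (residue A)).symm
  have hmapj : cj.map (residue A) = Matrix.charpoly (Qj.map (residue A)) :=
    (Matrix.charpoly_map Qj (residue A)).symm
  set h := U * ci + V * cj - 1 with hh
  have hhm : ∀ k, h.coeff k ∈ maximalIdeal A := by
    intro k
    have hmap0 : h.map (residue A) = 0 := by
      rw [hh, Polynomial.map_sub, Polynomial.map_add, Polynomial.map_mul, Polynomial.map_mul,
        hU, hV, hmapi, hmapj, Polynomial.map_one, huv, sub_self]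
    have : (h.map (residue A)).coeff k = 0 := by rw [hmap0]; simp
    rw [Polynomial.coeff_map] at this
    exact Ideal.Quotient.eq_zero_iff_mem.mp this
  have haevalh : entIn (maximalIdeal A) (aeval Qi h) := by
    intro a b
    rw [Polynomial.aeval_eq_sum_range (p := h) Qi, Matrix.sum_apply]
    refine Submodule.sum_mem _ fun c _ => ?_
    rw [Matrix.smul_apply, smul_eq_mul]
    exact Ideal.mul_mem_right _ _ (hhm c)
  have hcjE : entIn I1 ((aeval Qi cj) * E) := by
    have h0 : aeval Qj cj = 0 := Matrix.aeval_self_charpoly Qj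
    have h1 := hpoly cj
    rw [h0, Matrix.mul_zero, sub_zero] at h1
    exact h1
  have hE1 : E = aeval Qi V * ((aeval Qi cj) * E) - (aeval Qi h) * E := by
    have h1 : aeval Qi V * aeval Qi cj = 1 + aeval Qi h := by
      have h2 : (U * ci + V * cj : A[X]) = 1 + h := by rw [hh]; ring
      have h3 := congrArg (aeval Qi) h2
      rw [map_add, _root_.map_mul, _root_.map_mul, Matrix.aeval_self_charpoly, mul_zero,
        zero_add, map_add, _root_.map_one] at h3
      exact h3
    rw [← Matrix.mul_assoc, h1, Matrix.add_mul, Matrix.one_mul, add_sub_cancel_right]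
  have final : entIn I1 (aeval Qi V * ((aeval Qi cj) * E) - (aeval Qi h) * E) :=
    (hcjE.mul_left (aeval Qi V)).sub (entIn.mul_mul haevalh hE hmIJ)
  rwa [← hE1] at final

end sylv

/-! ### The main inductive step -/

section mainstep

variable {A : Type*} [CommRing A] [IsLocalRing A] {r : ℕ} {n : Fin r → ℕ}

theorem main_step
    (N : ℕ) (hN : 1 ≤ N) (hnN : ∀ i, n i ≤ N)
    (hnij : ∀ i j : Fin r, i ≠ j → n i + n j ≤ N)
    (l : ℕ) (hlA : (l : A) ∈ maximalIdeal A)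
    (M : ℕ) (hM2 : 2 ≤ M) (hM1 : l ∣ M - 1)
    (hMk : ∀ k, 2 ≤ k → k ≤ N → l ∣ M.choose k)
    (Sm Q : Matrix ((i : Fin r) × Fin (n i)) ((i : Fin r) × Fin (n i)) A)
    (hQ : IsBlkDiag Q)
    (hPS : Q * Sm = Sm ^ M * Q)
    (hSd : ∀ x y : (i : Fin r) × Fin (n i), x.1 = y.1 →
      Sm x y - (1 + Wm A n) x y ∈ maximalIdeal A)
    (hcop : ∀ i j : Fin r, i ≠ j →
      IsCoprime (Matrix.charpoly ((blk Q i).map (residue A)))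
        (Matrix.charpoly ((blk Q j).map (residue A))))
    (j : ℕ) (hj : 1 ≤ j)
    (hE : ∀ x y : (i : Fin r) × Fin (n i), x.1 ≠ y.1 → Sm x y ∈ maximalIdeal A ^ j) :
    ∀ x y : (i : Fin r) × Fin (n i), x.1 ≠ y.1 → Sm x y ∈ maximalIdeal A ^ (j + 1) := by
  classical
  set IJ : Ideal A := maximalIdeal A ^ j with hIJdef
  set I1 : Ideal A := maximalIdeal A ^ (j + 1) with hI1def
  have hmIJ : ∀ a b : A, a ∈ maximalIdeal A → b ∈ IJ → a * b ∈ I1 := by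
    intro a b ha hb
    rw [hI1def, pow_succ']
    exact Ideal.mul_mem_mul ha hb
  have hIJm : IJ ≤ maximalIdeal A := Ideal.pow_le_self (by omega)
  have hI1m : I1 ≤ maximalIdeal A := Ideal.pow_le_self (by omega)
  have hIJIJ : ∀ a b : A, a ∈ IJ → b ∈ IJ → a * b ∈ I1 := fun a b ha hb =>
    hmIJ a b (hIJm ha) hb
  set W := Wm A n with hW
  set J : Matrix ((i : Fin r) × Fin (n i)) ((i : Fin r) × Fin (n i)) A := 1 + W with hJ
  set Eg : Matrix ((i : Fin r) × Fin (n i)) ((i : Fin r) × Fin (n i)) A :=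
    Matrix.of (fun x y => if x.1 = y.1 then (0 : A) else Sm x y) with hEg
  have hEgIJ : entIn IJ Eg := by
    intro x y
    rw [hEg, Matrix.of_apply]
    by_cases h : x.1 = y.1
    · rw [if_pos h]; exact Submodule.zero_mem _
    · rw [if_neg h]; exact hE x y h
  have hEgoff : ∀ x y : (i : Fin r) × Fin (n i), x.1 ≠ y.1 → Eg x y = Sm x y := by
    intro x y h
    rw [hEg, Matrix.of_apply, if_neg h]
  have hJblk : IsBlkDiag J := by
    intro x y h
    rw [hJ, Matrix.add_apply, IsBlkDiag.one x y h, hW, Wm_blkDiag x y h, add_zero]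
  have hK : BlkIn (maximalIdeal A) I1 (Sm - (J + Eg)) := by
    intro x y
    by_cases h : x.1 = y.1
    · rw [if_pos h]
      have he : (Sm - (J + Eg)) x y = Sm x y - (1 + W) x y := by
        rw [Matrix.sub_apply, Matrix.add_apply, hEg, Matrix.of_apply, if_pos h, add_zero, hJ]
      rw [he]; exact hSd x y h
    · rw [if_neg h]
      have he : (Sm - (J + Eg)) x y = 0 := by
        rw [Matrix.sub_apply, Matrix.add_apply, hEgoff x y h, hJblk x y h, zero_add, sub_self]
      rw [he]; exact Submodule.zero_mem _
  set F : ℕ → Matrix ((i : Fin r) × Fin (n i)) ((i : Fin r) × Fin (n i)) A :=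
    fun K => ∑ s ∈ Finset.range K, W ^ s * Eg * W ^ (K - 1 - s) with hF
  set G : ℕ → Matrix ((i : Fin r) × Fin (n i)) ((i : Fin r) × Fin (n i)) A :=
    fun m => ∑ k ∈ Finset.range (2 * N), (Nat.choose m (k + 1) : A) • F (k + 1) with hG
  have hWz : ∀ s : ℕ, N ≤ s → W ^ s = 0 := fun s hs => Wm_pow_eq_zero hnN hs
  have hF1 : F 1 = Eg := by
    simp only [hF]
    rw [Finset.sum_range_one]
    show W ^ 0 * Eg * W ^ 0 = Eg
    rw [pow_zero, Matrix.one_mul, Matrix.mul_one]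
  have hFtop : F (2 * N + 1) = 0 := by
    simp only [hF]
    refine Finset.sum_eq_zero fun s hs => ?_
    rw [Finset.mem_range] at hs
    by_cases hsN : N ≤ s
    · rw [hWz s hsN, Matrix.zero_mul, Matrix.zero_mul]
    · have h2 : N ≤ 2 * N + 1 - 1 - s := by omega
      rw [hWz _ h2, Matrix.mul_zero]
  have hFW : ∀ K, F K * W = F (K + 1) - W ^ K * Eg := by
    intro K
    rw [eq_sub_iff_add_eq]
    simp only [hF]
    rw [Finset.sum_mul, Finset.sum_range_succ]
    have h1 : ∀ s ∈ Finset.range K, W ^ s * Eg * W ^ (K - 1 - s) * W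
        = W ^ s * Eg * W ^ (K + 1 - 1 - s) := by
      intro s hs
      rw [Finset.mem_range] at hs
      rw [Matrix.mul_assoc, ← pow_succ]
      congr 2
      omega
    rw [Finset.sum_congr rfl h1]
    congr 1
    rw [Nat.add_sub_cancel, Nat.sub_self, pow_zero, Matrix.mul_one]
  have hJpow : ∀ m, J ^ m = ∑ s ∈ Finset.range N, (Nat.choose m s : A) • W ^ s := by
    intro m
    induction m with
    | zero =>
      rw [pow_zero, Finset.sum_eq_single_of_mem 0 (Finset.mem_range.mpr (by omega))]
      · simp
      · intro s _ hs
        rw [Nat.choose_eq_zero_of_lt (by omega), Nat.cast_zero, zero_smul]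
    | succ m ih =>
      obtain ⟨N', rfl⟩ : ∃ N', N = N' + 1 := ⟨N - 1, by omega⟩
      rw [pow_succ, ih, hJ, mul_add, mul_one, Finset.sum_mul]
      have h1 : ∀ s ∈ Finset.range (N' + 1), ((Nat.choose m s : A) • W ^ s) * W
          = (Nat.choose m s : A) • W ^ (s + 1) := by
        intro s _
        rw [Matrix.smul_mul, ← pow_succ]
      rw [Finset.sum_congr rfl h1]
      rw [Finset.sum_range_succ (fun s => (Nat.choose m s : A) • W ^ (s + 1)) N']
      rw [hWz (N' + 1) (le_refl _), smul_zero, add_zero]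
      rw [Finset.sum_range_succ' (fun s => (Nat.choose (m + 1) s : A) • W ^ s) N']
      rw [Finset.sum_range_succ' (fun s => (Nat.choose m s : A) • W ^ s) N']
      simp only [Nat.choose_succ_succ, Nat.cast_add, add_smul, Nat.choose_zero_right]
      rw [Finset.sum_add_distrib]
      abel
  have hGrec : ∀ m, J ^ m * Eg + G m * J = G (m + 1) := by
    intro m
    have hGJ : G m * J = G m + ∑ k ∈ Finset.range (2 * N),
        (Nat.choose m (k + 1) : A) • (F (k + 2) - W ^ (k + 1) * Eg) := by
      rw [hJ, mul_add, mul_one]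
      congr 1
      simp only [hG]
      rw [Finset.sum_mul]
      refine Finset.sum_congr rfl fun k _ => ?_
      rw [Matrix.smul_mul, hFW (k + 1)]
    have hT0 : J ^ m * Eg = ∑ s ∈ Finset.range (N), (Nat.choose m s : A) • (W ^ s * Eg) := by
      rw [hJpow m, Finset.sum_mul]
      exact Finset.sum_congr rfl fun s _ => Matrix.smul_mul _ _ _
    have hA : (∑ k ∈ Finset.range (2 * N), (Nat.choose m (k + 1) : A) • F (k + 2))
        = (∑ k ∈ Finset.range (2 * N), (Nat.choose m k : A) • F (k + 1)) - Eg := by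
      have e1 := Finset.sum_range_succ' (fun k => (Nat.choose m k : A) • F (k + 1)) (2 * N)
      rw [Finset.sum_range_succ (fun k => (Nat.choose m k : A) • F (k + 1)) (2 * N)] at e1
      rw [hFtop, smul_zero, add_zero] at e1
      rw [Nat.choose_zero_right, Nat.cast_one, one_smul, hF1] at e1
      rw [eq_sub_iff_add_eq, ← e1]
    have hB : (∑ s ∈ Finset.range N, (Nat.choose m s : A) • (W ^ s * Eg))
        = (∑ k ∈ Finset.range (2 * N), (Nat.choose m (k + 1) : A) • (W ^ (k + 1) * Eg)) + Eg := by
      have e1 := Finset.sum_range_succ' (fun k => (Nat.choose m k : A) • (W ^ k * Eg)) (2 * N)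
      have e3 : ∑ k ∈ Finset.range (2 * N + 1), (Nat.choose m k : A) • (W ^ k * Eg)
          = ∑ s ∈ Finset.range N, (Nat.choose m s : A) • (W ^ s * Eg) := by
        symm
        apply Finset.sum_subset (Finset.range_subset_range.mpr (by omega))
        intro s _ hs
        rw [Finset.mem_range, not_lt] at hs
        rw [hWz s hs, Matrix.zero_mul, smul_zero]
      rw [e3] at e1
      rw [e1]
      rw [Nat.choose_zero_right, Nat.cast_one, one_smul, pow_zero, Matrix.one_mul]
    have hGm1 : G (m + 1) = G m + ∑ k ∈ Finset.range (2 * N), (Nat.choose m k : A) • F (k + 1) := by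
      simp only [hG]
      rw [← Finset.sum_add_distrib]
      refine Finset.sum_congr rfl fun k _ => ?_
      rw [Nat.choose_succ_succ, Nat.cast_add, add_smul, add_comm]
    rw [hT0, hGJ, hGm1, hB]
    simp only [smul_sub]
    rw [Finset.sum_sub_distrib, hA]
    abel
  -- closure facts
  have hSmG : BlkIn ⊤ IJ Sm := by
    intro x y
    by_cases h : x.1 = y.1
    · rw [if_pos h]; trivial
    · rw [if_neg h]; exact hE x y h
  have hGent : ∀ m, entIn IJ (G m) := by
    intro m
    simp only [hG]
    refine entIn.sum fun k _ => ?_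
    refine entIn.smul _ ?_
    simp only [hF]
    exact entIn.sum fun s _ => (hEgIJ.mul_left _).mul_right _
  have hJmG : ∀ m, BlkIn ⊤ IJ (J ^ m + G m) := by
    intro m x y
    by_cases h : x.1 = y.1
    · rw [if_pos h]; trivial
    · rw [if_neg h, Matrix.add_apply, (hJblk.pow m) x y h, zero_add]
      exact hGent m x y
  have hEGclosure : ∀ {Z Y : Matrix ((i : Fin r) × Fin (n i)) ((i : Fin r) × Fin (n i)) A},
      BlkIn (maximalIdeal A) I1 Z → BlkIn ⊤ IJ Y → BlkIn (maximalIdeal A) I1 (Z * Y) := by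
    intro Z Y hZ hY
    refine hZ.mul hY ?_ ?_ ?_ ?_ ?_
    · exact fun a b ha _ => Ideal.mul_mem_right _ _ ha
    · exact fun a b ha _ => Ideal.mul_mem_right _ _ (hI1m ha)
    · exact fun a b ha _ => Ideal.mul_mem_right _ _ ha
    · exact fun a b ha hb => hmIJ a b ha hb
    · exact fun a b ha _ => Ideal.mul_mem_right _ _ ha
  have hGEclosure : ∀ {Y Z : Matrix ((i : Fin r) × Fin (n i)) ((i : Fin r) × Fin (n i)) A},
      BlkIn ⊤ IJ Y → BlkIn (maximalIdeal A) I1 Z → BlkIn (maximalIdeal A) I1 (Y * Z) := by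
    intro Y Z hY hZ
    refine hY.mul hZ ?_ ?_ ?_ ?_ ?_
    · exact fun a b _ hb => Ideal.mul_mem_left _ _ hb
    · exact fun a b _ hb => Ideal.mul_mem_left _ _ (hI1m hb)
    · exact fun a b _ hb => Ideal.mul_mem_left _ _ hb
    · exact fun a b _ hb => Ideal.mul_mem_left _ _ hb
    · exact fun a b ha hb => by rw [mul_comm]; exact hmIJ b a hb ha
  have hkey : ∀ m, BlkIn (maximalIdeal A) I1 (Sm ^ m - (J ^ m + G m)) := by
    intro m
    induction m with
    | zero =>
      have hG0 : G 0 = 0 := by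
        simp only [hG]
        refine Finset.sum_eq_zero fun k _ => ?_
        rw [Nat.choose_eq_zero_of_lt (by omega), Nat.cast_zero, zero_smul]
      rw [pow_zero, pow_zero, hG0, add_zero, sub_self]
      intro x y
      rw [Matrix.zero_apply]
      by_cases h : x.1 = y.1
      · rw [if_pos h]; exact Submodule.zero_mem _
      · rw [if_neg h]; exact Submodule.zero_mem _
    | succ m ih =>
      have h3 : (J ^ m + G m) * (J + Eg) = (J ^ (m + 1) + G (m + 1)) + G m * Eg := by
        rw [mul_add, add_mul, add_mul, pow_succ, ← hGrec m]
        abel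
      have heq : Sm ^ (m + 1) - (J ^ (m + 1) + G (m + 1))
          = (Sm ^ m - (J ^ m + G m)) * Sm + (J ^ m + G m) * (Sm - (J + Eg)) + G m * Eg := by
        rw [sub_mul, mul_sub, h3, pow_succ]
        abel
      rw [heq]
      refine ((hEGclosure ih hSmG).add (hGEclosure (hJmG m) hK)).add ?_
      exact blkIn_of_entIn (entIn.mul_mul (hGent m) hEgIJ hIJIJ) hI1m le_rfl
  -- main congruence for the `M`-th power at off-diagonal entries
  have hSM : ∀ x y : (i : Fin r) × Fin (n i), x.1 ≠ y.1 → (Sm ^ M) x y - Sm x y ∈ I1 := by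
    intro x y hxy
    have h1 := hkey M x y
    rw [if_neg hxy] at h1
    have h2 : (Sm ^ M - (J ^ M + G M)) x y = (Sm ^ M) x y - G M x y := by
      rw [Matrix.sub_apply, Matrix.add_apply, (hJblk.pow M) x y hxy, zero_add]
    rw [h2] at h1
    have hterm : ∀ k ∈ Finset.range (2 * N),
        ((Nat.choose M (k + 1) : A) • F (k + 1)) x y - (if k = 0 then Sm x y else 0) ∈ I1 := by
      intro k hk
      rw [Matrix.smul_apply, smul_eq_mul]
      by_cases hk0 : k = 0
      · subst hk0
        rw [if_pos rfl, hF1, Nat.choose_one_right, hEgoff x y hxy]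
        have hc : (M : A) * Sm x y - Sm x y = ((M - 1 : ℕ) : A) * Sm x y := by
          rw [Nat.cast_sub (by omega), Nat.cast_one, sub_mul, one_mul]
        rw [hc]
        obtain ⟨c, hcc⟩ := hM1
        rw [hcc, Nat.cast_mul, mul_assoc]
        exact hmIJ _ _ hlA (Ideal.mul_mem_left _ _ (hE x y hxy))
      · rw [if_neg hk0, sub_zero]
        have hFxy : (F (k + 1)) x y = ∑ s ∈ Finset.range (k + 1), (W ^ s * Eg * W ^ (k - s)) x y := by
          simp only [hF, Matrix.sum_apply]
          rfl
        rw [hFxy, Finset.mul_sum]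
        refine Submodule.sum_mem _ fun s hs => ?_
        rw [Finset.mem_range] at hs
        rw [Matrix.mul_assoc, Wpow_mul_apply]
        split_ifs with h4
        · rw [mul_Wpow_apply]
          split_ifs with h5
          · have h6 := y.2.isLt
            have h7 := hnij x.1 y.1 hxy
            have hkN : k + 1 ≤ N := by omega
            obtain ⟨c, hcc⟩ := hMk (k + 1) (by omega) hkN
            rw [hcc, Nat.cast_mul, mul_assoc]
            refine hmIJ _ _ hlA (Ideal.mul_mem_left _ _ ?_)
            exact hEgIJ _ _
          · rw [mul_zero]; exact Submodule.zero_mem _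
        · rw [mul_zero]; exact Submodule.zero_mem _
    have h4 := Submodule.sum_mem I1 hterm
    rw [Finset.sum_sub_distrib, Finset.sum_ite_eq' (Finset.range (2 * N)) 0
      (fun _ => Sm x y)] at h4
    rw [if_pos (Finset.mem_range.mpr (by omega))] at h4
    have h5 : G M x y = ∑ k ∈ Finset.range (2 * N), ((Nat.choose M (k + 1) : A) • F (k + 1)) x y := by
      simp only [hG, Matrix.sum_apply]
    rw [← h5] at h4
    have h6 := Submodule.add_mem I1 h1 h4
    have h7 : (Sm ^ M) x y - G M x y + (G M x y - Sm x y) = (Sm ^ M) x y - Sm x y := by ring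
    rwa [h7] at h6
  -- Sylvester step
  intro x y hxy
  obtain ⟨i, a⟩ := x
  obtain ⟨j', b⟩ := y
  have hij : i ≠ j' := hxy
  set Eij : Matrix (Fin (n i)) (Fin (n j')) A :=
    Matrix.of (fun a b => Sm ⟨i, a⟩ ⟨j', b⟩) with hEijd
  have hEijIJ : entIn IJ Eij := fun a b => hE _ _ hij
  have hcomm : entIn I1 (blk Q i * Eij - Eij * blk Q j') := by
    intro a b
    rw [Matrix.sub_apply]
    have h1 : (blk Q i * Eij) a b = (Q * Sm) ⟨i, a⟩ ⟨j', b⟩ := by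
      rw [mul_apply_left hQ i a ⟨j', b⟩, Matrix.mul_apply]
      rfl
    have h2 : (Eij * blk Q j') a b = ∑ c : Fin (n j'), Sm ⟨i, a⟩ ⟨j', c⟩ * Q ⟨j', c⟩ ⟨j', b⟩ := by
      rw [Matrix.mul_apply]
      rfl
    have h3 : (Sm ^ M * Q) ⟨i, a⟩ ⟨j', b⟩
        = ∑ c : Fin (n j'), (Sm ^ M) ⟨i, a⟩ ⟨j', c⟩ * Q ⟨j', c⟩ ⟨j', b⟩ :=
      mul_apply_right hQ _ j' b
    rw [h1, h2, hPS, h3, ← Finset.sum_sub_distrib]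
    refine Submodule.sum_mem _ fun c _ => ?_
    rw [← sub_mul]
    exact Ideal.mul_mem_right _ _ (hSM ⟨i, a⟩ ⟨j', c⟩ hij)
  exact sylvester IJ I1 hmIJ (blk Q i) (blk Q j') (hcop i j' hij) Eij hEijIJ hcomm a b

end mainstep

end IBDaux

open IBDaux in
/-- Lemma 7.9-type statement: if `Φ Σ Φ⁻¹ = Σ^q`, the reduction of `Σ` is block diagonal with
unipotent Jordan blocks `J_{n_i}(1)`, `Φ` is block diagonal, the characteristic polynomials of
the `f`-th powers of the reductions of its blocks are pairwise coprime, and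
`v_l(q^f - 1) > v_l(n!)`, then `Σ` itself is block diagonal. -/
theorem inertia_block_diagonal
    (l : ℕ) (hl : l.Prime)
    {A : Type*} [CommRing A] [IsArtinianRing A] [IsLocalRing A]
    [CharP (ResidueField A) l]
    (q : ℕ) (hq : 2 ≤ q) (hlq : ¬ l ∣ q)
    (f : ℕ) (hf : 1 ≤ f)
    {r : ℕ} (n : Fin r → ℕ) (hn : ∀ i, 0 < n i)
    (N : ℕ) (hN : 1 ≤ N) (hsum : ∑ i, n i = N)
    (hval : padicValNat l (N.factorial) < padicValNat l (q ^ f - 1))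
    (S P : GL ((i : Fin r) × Fin (n i)) A)
    (hconj : P * S * P⁻¹ = S ^ q)
    -- (i) the reduction of `S` is block diagonal with Jordan blocks `J_{n_i}(1)`
    (hSbar : ∀ x y : (i : Fin r) × Fin (n i),
      residue A ((S : Matrix ((i : Fin r) × Fin (n i)) ((i : Fin r) × Fin (n i)) A) x y)
        = if x.1 = y.1 ∧ ((y.2 : ℕ) = (x.2 : ℕ) ∨ (y.2 : ℕ) = (x.2 : ℕ) + 1) then 1 else 0)
    -- (ii) `P` is block diagonal
    (hPblock : ∀ x y : (i : Fin r) × Fin (n i), x.1 ≠ y.1 →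
      (P : Matrix ((i : Fin r) × Fin (n i)) ((i : Fin r) × Fin (n i)) A) x y = 0)
    -- (iii) the characteristic polynomials of the `f`-th powers of the reduced blocks of `P`
    -- are pairwise coprime
    (hcoprime : ∀ i j : Fin r, i ≠ j →
      IsCoprime
        (Matrix.charpoly ((Matrix.of fun a b : Fin (n i) =>
          residue A ((P : Matrix ((i : Fin r) × Fin (n i)) ((i : Fin r) × Fin (n i)) A) ⟨i, a⟩ ⟨i, b⟩)) ^ f))
        (Matrix.charpoly ((Matrix.of fun a b : Fin (n j) =>
          residue A ((P : Matrix ((i : Fin r) × Fin (n i)) ((i : Fin r) × Fin (n i)) A) ⟨j, a⟩ ⟨j, b⟩)) ^ f))) :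
    ∀ x y : (i : Fin r) × Fin (n i), x.1 ≠ y.1 →
      (S : Matrix ((i : Fin r) × Fin (n i)) ((i : Fin r) × Fin (n i)) A) x y = 0 := by
  classical
  set Sm := (S : Matrix ((i : Fin r) × Fin (n i)) ((i : Fin r) × Fin (n i)) A) with hSmd
  set Pm := (P : Matrix ((i : Fin r) × Fin (n i)) ((i : Fin r) × Fin (n i)) A) with hPmd
  have hk : ∀ k : ℕ, P ^ k * S * (P ^ k)⁻¹ = S ^ q ^ k := by
    intro k
    induction k with
    | zero => simp
    | succ k ih =>
      have h1 : P ^ (k + 1) * S * (P ^ (k + 1))⁻¹ = P ^ k * (P * S * P⁻¹) * (P ^ k)⁻¹ := by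
        rw [pow_succ]
        group
      rw [h1, hconj, ← conj_pow, ih, ← pow_mul, ← pow_succ]
  have hgl : P ^ f * S = S ^ q ^ f * P ^ f := by
    have h2 := hk f
    rwa [mul_inv_eq_iff_eq_mul] at h2
  have hPSm : (Pm ^ f) * Sm = Sm ^ (q ^ f) * (Pm ^ f) := by
    have h3 := congrArg
      (fun u : GL ((i : Fin r) × Fin (n i)) A =>
        (u : Matrix ((i : Fin r) × Fin (n i)) ((i : Fin r) × Fin (n i)) A)) hgl
    simpa only [Units.val_mul, Units.val_pow_eq_pow_val] using h3
  have hPblk : IsBlkDiag Pm := fun x y h => hPblock x y h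
  have hQblk : IsBlkDiag (Pm ^ f) := hPblk.pow f
  have hnN : ∀ i, n i ≤ N := by
    intro i
    calc n i ≤ ∑ t, n t :=
          Finset.single_le_sum (fun t _ => Nat.zero_le (n t)) (Finset.mem_univ i)
      _ = N := hsum
  have hnij : ∀ i j : Fin r, i ≠ j → n i + n j ≤ N := by
    intro i j hij
    calc n i + n j = ∑ t ∈ ({i, j} : Finset (Fin r)), n t := (Finset.sum_pair hij).symm
      _ ≤ ∑ t, n t := Finset.sum_le_sum_of_subset (Finset.subset_univ _)
      _ = N := hsum
  have hM2 : 2 ≤ q ^ f := le_trans hq (Nat.le_self_pow (by omega) q)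
  have hlA : ((l : ℕ) : A) ∈ maximalIdeal A := by
    have h1 : residue A ((l : ℕ) : A) = 0 := by
      rw [map_natCast]
      exact CharP.cast_eq_zero (ResidueField A) l
    exact Ideal.Quotient.eq_zero_iff_mem.mp h1
  have hM1 : l ∣ q ^ f - 1 := dvd_of_one_le_padicValNat (by omega)
  have hMk : ∀ k, 2 ≤ k → k ≤ N → l ∣ (q ^ f).choose k := fun k h2 h3 =>
    choose_dvd_main hl hM2 hval h2 h3
  have hSd : ∀ x y : (i : Fin r) × Fin (n i), x.1 = y.1 →
      Sm x y - (1 + Wm A n) x y ∈ maximalIdeal A := by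
    intro x y h
    have hval1 : ((1 + Wm A n) x y : A)
        = if x.1 = y.1 ∧ ((y.2 : ℕ) = (x.2 : ℕ) ∨ (y.2 : ℕ) = (x.2 : ℕ) + 1) then 1 else 0 := by
      rw [Matrix.add_apply, Matrix.one_apply, Wm, Matrix.of_apply]
      by_cases h1 : (y.2 : ℕ) = (x.2 : ℕ)
      · rw [if_pos ((sig_ext_iff x y).mpr ⟨h, h1.symm⟩),
          if_neg (by rintro ⟨-, c2⟩; omega),
          if_pos ⟨h, Or.inl h1⟩, add_zero]
      · by_cases h2 : (y.2 : ℕ) = (x.2 : ℕ) + 1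
        · rw [if_neg (fun e => h1 (by cases e; rfl)), if_pos ⟨h, h2⟩,
            if_pos ⟨h, Or.inr h2⟩, zero_add]
        · rw [if_neg (fun e => h1 (by cases e; rfl)),
            if_neg (by rintro ⟨-, c2⟩; omega),
            if_neg (by rintro ⟨-, c2 | c2⟩ <;> omega), add_zero]
    have h2 : residue A (Sm x y - (1 + Wm A n) x y) = 0 := by
      rw [map_sub, hSbar x y, hval1]
      split_ifs <;> simp
    exact Ideal.Quotient.eq_zero_iff_mem.mp h2
  have hmappow : ∀ i : Fin r,
      (blk (Pm ^ f) i).map (residue A)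
        = (Matrix.of fun a b : Fin (n i) => residue A (Pm ⟨i, a⟩ ⟨i, b⟩)) ^ f := by
    intro i
    rw [blk_pow hPblk i f]
    have h1 : ∀ k : ℕ, ((blk Pm i) ^ k).map (residue A) = ((blk Pm i).map (residue A)) ^ k := by
      intro k
      induction k with
      | zero => rw [pow_zero, pow_zero]; exact Matrix.map_one _ (map_zero _) (map_one _)
      | succ k ih => rw [pow_succ, pow_succ, Matrix.map_mul, ih]
    rw [h1 f]
    rfl
  have hcopQ : ∀ i j : Fin r, i ≠ j →
      IsCoprime (Matrix.charpoly ((blk (Pm ^ f) i).map (residue A)))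
        (Matrix.charpoly ((blk (Pm ^ f) j).map (residue A))) := by
    intro i j hij
    rw [hmappow i, hmappow j]
    exact hcoprime i j hij
  have key : ∀ m : ℕ, ∀ x y : (i : Fin r) × Fin (n i), x.1 ≠ y.1 →
      Sm x y ∈ maximalIdeal A ^ (m + 1) := by
    intro m
    induction m with
    | zero =>
      intro x y h
      rw [pow_one]
      have h0 : residue A (Sm x y) = 0 := by
        rw [hSbar x y, if_neg (fun c => h c.1)]
      exact Ideal.Quotient.eq_zero_iff_mem.mp h0
    | succ m ih =>
      exact main_step N hN hnN hnij l hlA (q ^ f) hM2 hM1 hMk Sm (Pm ^ f) hQblk hPSm hSd hcopQ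
        (m + 1) (by omega) ih
  obtain ⟨k, hk0⟩ : IsNilpotent (maximalIdeal A) := by
    have h1 := IsArtinianRing.isNilpotent_jacobson_bot (R := A)
    rwa [IsLocalRing.jacobson_eq_maximalIdeal ⊥ bot_ne_top] at h1
  intro x y h
  have h1 := key k x y h
  have h2 : maximalIdeal A ^ (k + 1) ≤ ⊥ := by
    calc maximalIdeal A ^ (k + 1) ≤ maximalIdeal A ^ k := Ideal.pow_le_pow_right (by omega)
      _ = ⊥ := hk0
  exact (Submodule.mem_bot A).mp (h2 h1)
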